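/- (Boosted GFlowNet training performs boosting variational inference.) Assume P_B(τ|t(τ)) > 0 for every τ ∈ Γ. Let R̂_old : X → ℝ with R̂_old(x) ≥ 0, set Z_old := ∑_{x∈X} R̂_old(x) and assume Z_old > 0; let Z_θ > 0 be a constant and β := Z_θ/(Z_old + Z_θ). Let E be a finite-dimensional real normed vector space and p_F : E → Γ → ℝ a parametrized forward family with p_F(θ,τ) > 0, ∑_{τ∈Γ} p_F(θ,τ) = 1 for every θ, and θ ↦ p_F(θ,τ) differentiable. Define p_old(τ) := R̂_old(t(τ))·P_B(τ|t(τ))/Z_old, p_tgt(τ) := R(t(τ))·P_B(τ|t(τ))/(Z_old + Z_θ), p_M(θ,τ) := (1−β)·p_old(τ) + β·p_F(θ,τ), and the boosted loss L_boost(θ,τ) := (log(Z_θ·p_F(θ,τ)/P_B(τ|t(τ)) + R̂_old(t(τ))) − log R(t(τ)))². Then for every θ ∈ E, ∑_{τ∈Γ} p_M(θ,τ)·∇_θ L_boost(θ,τ) = 2·∇_θ[∑_{τ∈Γ} p_M(θ,τ)·log(p_M(θ,τ)/p_tgt(τ))], where ∇_θ denotes the Fréchet derivative with respect to θ. -/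

import Mathlib

set_option maxHeartbeats 1000000 in
/-- Boosted GFlowNet training performs boosting variational inference:
with `β = Z_θ/(Z_old + Z_θ)`, `p_old(τ) = R̂_old(t τ)·P_B(τ|t τ)/Z_old`,
`p_tgt(τ) = R(t τ)·P_B(τ|t τ)/(Z_old + Z_θ)`,
`p_M(θ,τ) = (1−β)·p_old(τ) + β·p_F(θ,τ)`, and boosted loss
`L_boost(θ,τ) = (log(Z_θ·p_F(θ,τ)/P_B(τ|t τ) + R̂_old(t τ)) − log R(t τ))²`,
the `p_M`-expected gradient of `L_boost` equals twice the gradient of the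
(generalized) KL divergence of `p_M(θ,·)` from `p_tgt`. -/
theorem boosted_gfn_is_boosting_vi
    {E : Type*} [NormedAddCommGroup E] [NormedSpace ℝ E] [FiniteDimensional ℝ E]
    {Γ X : Type*} [Fintype Γ] [Fintype X] [DecidableEq X]
    (t : Γ → X) (PB : X → Γ → ℝ) (R : X → ℝ)
    (Rold : X → ℝ) (Zθ : ℝ) (pF : E → Γ → ℝ)
    (hPB0 : ∀ x τ, 0 ≤ PB x τ)
    (hPBsupp : ∀ x τ, t τ ≠ x → PB x τ = 0)
    (hPB1 : ∀ x, ∑ τ ∈ Finset.univ.filter (fun τ => t τ = x), PB x τ = 1)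
    (hPBpos : ∀ τ, 0 < PB (t τ) τ)
    (hR : ∀ x, 0 < R x)
    (hRold : ∀ x, 0 ≤ Rold x)
    (hZold : 0 < ∑ x, Rold x)
    (hZθ : 0 < Zθ)
    (hpFpos : ∀ θ τ, 0 < pF θ τ)
    (hpFsum : ∀ θ, ∑ τ, pF θ τ = 1)
    (hpFdiff : ∀ τ, Differentiable ℝ (fun θ => pF θ τ)) :
    ∀ θ : E,
      (∑ τ,
        ((1 - Zθ / ((∑ x, Rold x) + Zθ)) *
            (Rold (t τ) * PB (t τ) τ / (∑ x, Rold x)) +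
          (Zθ / ((∑ x, Rold x) + Zθ)) * pF θ τ) •
          fderiv ℝ (fun θ' =>
            (Real.log (Zθ * pF θ' τ / PB (t τ) τ + Rold (t τ)) -
              Real.log (R (t τ))) ^ 2) θ) =
      (2 : ℝ) •
        fderiv ℝ (fun θ' => ∑ τ,
          ((1 - Zθ / ((∑ x, Rold x) + Zθ)) *
              (Rold (t τ) * PB (t τ) τ / (∑ x, Rold x)) +
            (Zθ / ((∑ x, Rold x) + Zθ)) * pF θ' τ) *
            Real.log
              ((((1 - Zθ / ((∑ x, Rold x) + Zθ)) *
                  (Rold (t τ) * PB (t τ) τ / (∑ x, Rold x)) +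
                (Zθ / ((∑ x, Rold x) + Zθ)) * pF θ' τ)) /
                (R (t τ) * PB (t τ) τ / ((∑ x, Rold x) + Zθ)))) θ := by
  intro θ
  set Z : ℝ := ∑ x, Rold x with hZdef
  have hZne : Z ≠ 0 := hZold.ne'
  have hc : (0:ℝ) < Z + Zθ := by positivity
  have hcne : Z + Zθ ≠ 0 := hc.ne'
  set β : ℝ := Zθ / (Z + Zθ) with hβdef
  have hβpos : 0 < β := div_pos hZθ hc
  -- derivative of pF
  set D : Γ → (E →L[ℝ] ℝ) := fun τ => fderiv ℝ (fun θ' => pF θ' τ) θ with hDdef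
  have hDτ : ∀ τ, HasFDerivAt (fun θ' => pF θ' τ) (D τ) θ :=
    fun τ => ((hpFdiff τ) θ).hasFDerivAt
  -- sum of D is zero
  have hsumD : (∑ τ, D τ) = 0 := by
    have h1 : HasFDerivAt (fun θ' => ∑ τ, pF θ' τ) (∑ τ, D τ) θ :=
      HasFDerivAt.fun_sum (fun τ _ => hDτ τ)
    have h2 : (fun θ' : E => ∑ τ, pF θ' τ) = fun _ => (1:ℝ) := funext hpFsum
    rw [h2] at h1
    exact h1.unique (hasFDerivAt_const _ _)
  -- abbreviations
  set g : E → Γ → ℝ := fun θ' τ => Zθ * pF θ' τ / PB (t τ) τ + Rold (t τ) with hgdef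
  set pM : E → Γ → ℝ := fun θ' τ =>
    (1 - β) * (Rold (t τ) * PB (t τ) τ / Z) + β * pF θ' τ with hpMdef
  have hgpos : ∀ θ' τ, 0 < g θ' τ := fun θ' τ => by
    have := hpFpos θ' τ; have := hPBpos τ; have := hRold (t τ)
    have : 0 < Zθ * pF θ' τ / PB (t τ) τ := by positivity
    simp only [hgdef]; linarith [hRold (t τ)]
  have hpMg : ∀ θ' τ, pM θ' τ = g θ' τ * PB (t τ) τ / (Z + Zθ) := by
    intro θ' τ
    have hPBne := (hPBpos τ).ne'
    simp only [hpMdef, hgdef, hβdef]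
    field_simp
    ring
  have hpMpos : ∀ θ' τ, 0 < pM θ' τ := fun θ' τ => by
    rw [hpMg]; have := hgpos θ' τ; have := hPBpos τ; positivity
  -- derivative of g
  have hgD : ∀ τ, HasFDerivAt (fun θ' => g θ' τ) ((Zθ / PB (t τ) τ) • D τ) θ := by
    intro τ
    have h := ((hDτ τ).const_mul (Zθ / PB (t τ) τ)).add_const (Rold (t τ))
    have hfun : (fun θ' => g θ' τ)
        = fun θ' => Zθ / PB (t τ) τ * pF θ' τ + Rold (t τ) := by
      funext θ'
      simp only [hgdef]
      ring
    rw [hfun]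
    exact h
  -- derivative of log g
  have hlogg : ∀ τ, HasFDerivAt (fun θ' => Real.log (g θ' τ))
      (((g θ τ)⁻¹ * (Zθ / PB (t τ) τ)) • D τ) θ := by
    intro τ
    have h := (hgD τ).log (hgpos θ τ).ne'
    rwa [smul_smul] at h
  -- ℓ τ
  set ℓ : Γ → ℝ := fun τ => Real.log (g θ τ) - Real.log (R (t τ)) with hℓdef
  -- key coefficient identity: pM θ τ * ((g θ τ)⁻¹ * (Zθ / PB (t τ) τ)) = β
  have hkey : ∀ τ, pM θ τ * ((g θ τ)⁻¹ * (Zθ / PB (t τ) τ)) = β := by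
    intro τ
    rw [hpMg]
    have hg := (hgpos θ τ).ne'
    have hPBne := (hPBpos τ).ne'
    field_simp [hβdef]
    rw [hβdef]
    linear_combination (-1 : ℝ) * (by field_simp : Zθ / (Z + Zθ) * (Z + Zθ) = Zθ)
  -- LHS: fderiv of loss
  have hL : ∀ τ, fderiv ℝ (fun θ' =>
      (Real.log (Zθ * pF θ' τ / PB (t τ) τ + Rold (t τ)) -
        Real.log (R (t τ))) ^ 2) θ
      = (2 * ℓ τ * ((g θ τ)⁻¹ * (Zθ / PB (t τ) τ))) • D τ := by
    intro τ
    have hv := (hlogg τ).sub_const (Real.log (R (t τ)))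
    have hsq := hv.mul hv
    have hfun : (fun θ' =>
        (Real.log (Zθ * pF θ' τ / PB (t τ) τ + Rold (t τ)) -
          Real.log (R (t τ))) ^ 2)
        = fun θ' => (Real.log (g θ' τ) - Real.log (R (t τ)))
            * (Real.log (g θ' τ) - Real.log (R (t τ))) := by
      funext θ'
      simp only [hgdef]
      ring
    rw [hfun]
    have h2 : HasFDerivAt (fun θ' => (Real.log (g θ' τ) - Real.log (R (t τ)))
            * (Real.log (g θ' τ) - Real.log (R (t τ))))
        ((2 * ℓ τ * ((g θ τ)⁻¹ * (Zθ / PB (t τ) τ))) • D τ) θ := by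
      have hd : ((2 * ℓ τ * ((g θ τ)⁻¹ * (Zθ / PB (t τ) τ))) • D τ)
          = (Real.log (g θ τ) - Real.log (R (t τ))) • ((g θ τ)⁻¹ * (Zθ / PB (t τ) τ)) • D τ +
            (Real.log (g θ τ) - Real.log (R (t τ))) • ((g θ τ)⁻¹ * (Zθ / PB (t τ) τ)) • D τ := by
        rw [smul_smul, ← add_smul]
        congr 1
        simp only [hℓdef]
        ring
      rw [hd]
      exact hsq
    exact h2.fderiv
  -- derivative of pM
  have hpMD : ∀ τ, HasFDerivAt (fun θ' => pM θ' τ) (β • D τ) θ := by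
    intro τ
    exact ((hDτ τ).const_mul β).const_add _
  -- KL summand rewrite
  have hKLfun : (fun θ' => ∑ τ,
      pM θ' τ * Real.log (pM θ' τ / (R (t τ) * PB (t τ) τ / (Z + Zθ))))
      = fun θ' => ∑ τ, pM θ' τ * (Real.log (g θ' τ) - Real.log (R (t τ))) := by
    funext θ'
    refine Finset.sum_congr rfl fun τ _ => ?_
    congr 1
    have hPBne := (hPBpos τ).ne'
    have hRne := (hR (t τ)).ne'
    have : pM θ' τ / (R (t τ) * PB (t τ) τ / (Z + Zθ)) = g θ' τ / R (t τ) := by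
      rw [hpMg]
      field_simp
    rw [this, Real.log_div (hgpos θ' τ).ne' hRne]
  -- derivative of KL
  have hKL : fderiv ℝ (fun θ' => ∑ τ,
      pM θ' τ * Real.log (pM θ' τ / (R (t τ) * PB (t τ) τ / (Z + Zθ)))) θ
      = ∑ τ, ((β + ℓ τ * β) • D τ) := by
    rw [hKLfun]
    have h : HasFDerivAt (fun θ' => ∑ τ, pM θ' τ * (Real.log (g θ' τ) - Real.log (R (t τ))))
        (∑ τ, ((β + ℓ τ * β) • D τ)) θ := by
      refine HasFDerivAt.fun_sum fun τ _ => ?_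
      have h := (hpMD τ).mul ((hlogg τ).sub_const (Real.log (R (t τ))))
      have hd : ((β + ℓ τ * β) • D τ)
          = pM θ τ • ((g θ τ)⁻¹ * (Zθ / PB (t τ) τ)) • D τ +
            (Real.log (g θ τ) - Real.log (R (t τ))) • β • D τ := by
        rw [smul_smul, smul_smul, add_smul]
        congr 2
        exact (hkey τ).symm
      rw [hd]
      exact h
    exact h.fderiv
  -- finish
  calc (∑ τ, pM θ τ • fderiv ℝ (fun θ' =>
      (Real.log (Zθ * pF θ' τ / PB (t τ) τ + Rold (t τ)) -
        Real.log (R (t τ))) ^ 2) θ)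
      = ∑ τ, (2 * ℓ τ * β) • D τ := by
        refine Finset.sum_congr rfl fun τ _ => ?_
        rw [hL τ, smul_smul]
        congr 1
        calc pM θ τ * (2 * ℓ τ * ((g θ τ)⁻¹ * (Zθ / PB (t τ) τ)))
            = 2 * ℓ τ * (pM θ τ * ((g θ τ)⁻¹ * (Zθ / PB (t τ) τ))) := by ring
          _ = 2 * ℓ τ * β := by rw [hkey τ]
    _ = (2:ℝ) • ∑ τ, ((β + ℓ τ * β) • D τ) := by
        rw [Finset.smul_sum]
        have : (∑ τ, (2:ℝ) • ((β + ℓ τ * β) • D τ))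
            = (∑ τ, (2*β) • D τ) + ∑ τ, (2 * ℓ τ * β) • D τ := by
          rw [← Finset.sum_add_distrib]
          refine Finset.sum_congr rfl fun τ _ => ?_
          rw [smul_smul, ← add_smul]
          congr 1
          ring
        rw [this]
        have : (∑ τ, (2*β) • D τ) = (2*β) • (∑ τ, D τ) := by rw [Finset.smul_sum]
        rw [this, hsumD, smul_zero, zero_add]
    _ = (2:ℝ) • fderiv ℝ (fun θ' => ∑ τ,
        pM θ' τ * Real.log (pM θ' τ / (R (t τ) * PB (t τ) τ / (Z + Zθ)))) θ := by
        rw [hKL]
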